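/- For all i, j ∈ ℤ/nℤ one has the operator identity [e_i^T, f_j^T] = δ_{ij}·h_i^T on N; that is, [e_i^T, f_j^T] = 0 if i ≠ j, and [e_i^T, f_i^T] = h_i^T. -/

import Mathlib

/-!
Common setup: raiz for the cyclic quiver `Ã_{n-1}`, the polynomial algebra
`N = ℚ[x_θ : θ ∈ R⁺(n)]`, and the locally finite differential operators
`E(θ)`, `Ẽ(θ)`, `B(θ)`, `𝔅_i`, `𝔈_i`, `Δ_i`, and the Chevalley operators
`e_i^T`, `h_i^T`, `f_i^T`, following Finkelberg–Kuznetsov.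
-/

open MvPolynomial

/-- A raiz for the cyclic quiver with `n` vertices: a pair `(p,q)` of integers with
`p ≤ q`, modulo simultaneous translation of both entries by `n`; it is faithfully
encoded by the ending class `q mod n : ZMod n` together with the (positive) length
`q - p + 1 : ℕ+`. -/
abbrev Raiz (n : ℕ) : Type := ZMod n × ℕ+

namespace Raiz

variable {n : ℕ}

/-- The class at which a raiz begins: for `(p,q)` this is `p mod n = (q - len + 1) mod n`. -/
def beg (θ : Raiz n) : ZMod n := θ.1 - ((θ.2 : ℕ) : ZMod n) + 1

/-- `θ = (p,q)` ends at `i` iff `q ≡ i (mod n)`. -/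
def Ends (θ : Raiz n) (i : ZMod n) : Prop := θ.1 = i

/-- `θ = (p,q)` begins at `i` iff `p ≡ i (mod n)`. -/
def Begins (θ : Raiz n) (i : ZMod n) : Prop := beg θ = i

/-- The simple raiz `(i,i)`. -/
def simple (i : ZMod n) : Raiz n := (i, 1)

/-- The concatenation `ϑ⌣θ`: it is defined (`some`) exactly when `θ` begins at the
class following the class at which `ϑ` ends; for `ϑ = (a,b)` ending at `i-1` and
`θ = (p,q)` beginning at `i` it is `(a, b+q-p+1)`, i.e. it ends where `θ` ends and
its length is the sum of the lengths. -/
def cat (ϑ θ : Raiz n) : Option (Raiz n) :=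
  if beg θ = ϑ.1 + 1 then some (θ.1, ϑ.2 + θ.2) else none

/-- `dimAt θ j` is the number of integers in `[p,q]` congruent to `j` mod `n`:
the dimension vector `dim θ ∈ ℕ^{ℤ/nℤ}` of the raiz `θ`. -/
def dimAt (θ : Raiz n) (j : ZMod n) : ℕ :=
  ((Finset.range (θ.2 : ℕ)).filter (fun t => θ.1 - ((t : ℕ) : ZMod n) = j)).card

end Raiz

/-- The polynomial algebra `N = ℚ[x_θ : θ ∈ R⁺(n)]`. -/
abbrev Pol (n : ℕ) := MvPolynomial (Raiz n) ℚ

/-- Operators on `N`. -/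
abbrev Op (n : ℕ) := Pol n → Pol n

noncomputable section

/-- The locally finite differential operator `Σ_η c(η)·∂/∂x_η`: applied to a
polynomial `P` only the (finitely many) variables occurring in `P` contribute,
since `∂P/∂x_η = 0` for `η ∉ vars P`. -/
def diffOp {n : ℕ} (c : Raiz n → Pol n) : Op n :=
  fun P => ∑ η ∈ P.vars, c η * pderiv η P

/-- `Ẽ(θ) = Σ_{ϑ ∈ E_{i-1}} x_ϑ ∂/∂x_{ϑ⌣θ}` for a raiz `θ` beginning at `i`: the
term `ϑ = 0` contributes `∂/∂x_θ` (as `x_0 = 1` and `0⌣θ = θ`), and a nonzero `ϑ`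
ending at `i-1` contributes at the variable `η = ϑ⌣θ`, i.e. at `η` with the same
end as `θ` and `len η > len θ`, with coefficient `x_ϑ`, where
`ϑ = (beg θ - 1, len η - len θ)`. -/
def Etil {n : ℕ} (θ : Raiz n) : Op n :=
  diffOp (fun η =>
    if η = θ then 1
    else if η.1 = θ.1 ∧ θ.2 < η.2 then X ((Raiz.beg θ - 1, η.2 - θ.2) : Raiz n) else 0)

/-- `E(θ) = Σ_{ϑ ∈ E_{i-1}} x_{ϑ⌣θ} ∂/∂x_ϑ` for a raiz `θ` beginning at `i`
(the `ϑ = 0` term vanishes since `∂/∂x_0 = 0`). -/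
def Eop {n : ℕ} (θ : Raiz n) : Op n :=
  diffOp (fun ϑ => if ϑ.1 = Raiz.beg θ - 1 then X ((θ.1, ϑ.2 + θ.2) : Raiz n) else 0)

/-- `B(θ) = Σ_{ϑ ∈ B_{i+1}} x_{θ⌣ϑ} ∂/∂x_ϑ` for a raiz `θ` ending at `i`
(the `ϑ = 0` term vanishes since `∂/∂x_0 = 0`). -/
def Bop {n : ℕ} (θ : Raiz n) : Op n :=
  diffOp (fun ϑ => if Raiz.beg ϑ = θ.1 + 1 then X ((ϑ.1, θ.2 + ϑ.2) : Raiz n) else 0)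

/-- `𝔅_i = Σ_{0 ≠ θ ∈ B_{i+1}} x_θ ∂/∂x_θ`. -/
def Bfrak {n : ℕ} (i : ZMod n) : Op n :=
  diffOp (fun θ => if Raiz.beg θ = i + 1 then X θ else 0)

/-- `𝔈_i = Σ_{0 ≠ θ ∈ E_{i-1}} x_θ ∂/∂x_θ`. -/
def Efrak {n : ℕ} (i : ZMod n) : Op n :=
  diffOp (fun θ => if θ.1 = i - 1 then X θ else 0)

/-- The commutator `[f,g] = f∘g - g∘f` of two operators. -/
def brak {n : ℕ} (f g : Op n) : Op n := fun P => f (g P) - g (f P)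

/-- Multiplication by `x_θ` as an operator on `N`. -/
def mulX {n : ℕ} (θ : Raiz n) : Op n := fun P => X θ * P

/-- Extend a raiz-indexed family of operators to `Option (Raiz n)`: a term with
an undefined concatenation is declared to be `0`. -/
def opt {n : ℕ} (F : Raiz n → Op n) : Option (Raiz n) → Op n
  | none => 0
  | some θ => F θ

/-- `Δ_i = 𝔅_{i-1} - 𝔅_i + c_i`, for a fixed family of constants `c`. -/
def Delta {n : ℕ} (c : ZMod n → ℚ) (i : ZMod n) : Op n :=
  fun P => Bfrak (i - 1) P - Bfrak i P + c i • P

/-- The Chevalley operator `e_i^T = Ẽ(i)`. -/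
def eT {n : ℕ} (i : ZMod n) : Op n := Etil (Raiz.simple i)

/-- The Chevalley operator `h_i^T = 𝔈_{i+1} - 𝔈_i + Δ_i`. -/
def hT {n : ℕ} (c : ZMod n → ℚ) (i : ZMod n) : Op n :=
  fun P => Efrak (i + 1) P - Efrak i P + Delta c i P

/-- The Chevalley operator `f_i^T = B(i) - E(i) + x_i·Δ_i`. -/
def fT {n : ℕ} (c : ZMod n → ℚ) (i : ZMod n) : Op n :=
  fun P => Bop (Raiz.simple i) P - Eop (Raiz.simple i) P + X (Raiz.simple i) * Delta c i P

/-- The affine Cartan matrix of type `Ã_{n-1}` (for `n ≥ 2`): `a_ii = 2`;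
`a_ij = -1` if `j = i±1` and `n ≠ 2`; `a_ij = -2` if `n = 2` and `j = i+1 ≠ i`;
`a_ij = 0` otherwise. -/
def cartan (n : ℕ) (i j : ZMod n) : ℤ :=
  if j = i then 2
  else if n = 2 then -2
  else if j = i + 1 ∨ j = i - 1 then -1
  else 0

/-- The projection `ζ : R⁺(m) → R⁺(n)` for `n ∣ m`: the class of `(p,q)` modulo `m`
is sent to its class modulo `n`. -/
def Raiz.zetaR {n m : ℕ} (h : n ∣ m) : Raiz m → Raiz n :=
  fun θ => (ZMod.castHom h (ZMod n) θ.1, θ.2)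

/-- The induced `ℚ`-algebra homomorphism `ζ : ℚ[x_ϑ : ϑ ∈ R⁺(m)] → ℚ[x_θ : θ ∈ R⁺(n)]`,
`x_ϑ ↦ x_{ζ(ϑ)}`. -/
def zeta {n m : ℕ} (h : n ∣ m) : Pol m →ₐ[ℚ] Pol n :=
  MvPolynomial.rename (Raiz.zetaR h)

/-- The natural-number representatives in `[0, m)` of the residues `≡ i (mod n)`:
for `n ∣ m` these enumerate (via `ℕ → ZMod m`) exactly the classes `j ∈ ℤ/mℤ` with
`j ≡ i (mod n)`. -/
def fiber (n m : ℕ) (i : ZMod n) : Finset ℕ :=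
  (Finset.range m).filter (fun t => ((t : ZMod n) = i))

/-- All raiz of level `n` with length at most `m`. -/
def raizUpTo (n m : ℕ) : Finset (Raiz n) :=
  ((Finset.range n).image (fun a : ℕ => ((a : ZMod n)))) ×ˢ
    ((Finset.range m).image (fun l : ℕ => (⟨l + 1, Nat.succ_pos l⟩ : ℕ+)))

open Classical in
/-- Kostant partitions of the dimension vector `γ`, as multisets `κ` of raiz with
`Σ_{θ ∈ κ} dim θ = γ`; the parameter `m` bounds the lengths of parts and the
multiplicities, so for `Σ_j γ(j) ≤ m` this is the set of all Kostant partitions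
of `γ`. -/
def kostant (n : ℕ) (γ : ZMod n → ℕ) (m : ℕ) : Finset (Multiset (Raiz n)) :=
  ((m • (raizUpTo n m).val).powerset.toFinset).filter
    (fun κ => ∀ j, (κ.map (fun θ => θ.dimAt j)).sum = γ j)

/-- The monomial `x^κ` attached to a Kostant partition `κ`. -/
def xPow {n : ℕ} (κ : Multiset (Raiz n)) : Pol n :=
  (κ.map (fun θ => (X θ : Pol n))).prod

/-- `P_n = Σ_{κ ∈ 𝔎(α_n)} (-1)^{K(κ)+1} x^κ`: the sum is over all Kostant partitions
of the all-ones dimension vector `α_n` (all of whose parts have length `≤ n` and which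
have at most `n` parts). -/
def Ppoly (n : ℕ) : Pol n :=
  ∑ κ ∈ kostant n (fun _ => 1) n, ((-1 : ℚ) ^ (Multiset.card κ + 1)) • xPow κ

open Classical in
/-- `a_p = Σ_{θ : dim θ = p·α_n} Ẽ(θ)` for `p ≥ 1` (a finite sum: such `θ` have
length `p·n`). -/
def aPos (n p : ℕ) : Op n :=
  fun P => ∑ θ ∈ (raizUpTo n (p * n)).filter (fun θ => ∀ j, θ.dimAt j = p), Etil θ P

/-- `a_{-p}`: `c₀` times the operator of multiplication by `ζ(P_{pn})`, for `p ≥ 1`. -/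
def aNeg (n : ℕ) (c₀ : ℚ) (p : ℕ) : Op n :=
  fun P => c₀ • (zeta (dvd_mul_left n p) (Ppoly (p * n)) * P)

end

namespace CommEF
open MvPolynomial Raiz

variable {n : ℕ}

/-! ### Basic lemmas about `diffOp` -/

lemma diffOp_eq_sum (c : Raiz n → Pol n) (P : Pol n) (S : Finset (Raiz n))
    (hS : P.vars ⊆ S) : diffOp c P = ∑ η ∈ S, c η * pderiv η P := by
  refine Finset.sum_subset hS fun x _ hx => ?_
  rw [pderiv_eq_zero_of_notMem_vars hx, mul_zero]

lemma diffOp_add (c : Raiz n → Pol n) (P Q : Pol n) :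
    diffOp c (P + Q) = diffOp c P + diffOp c Q := by
  classical
  rw [diffOp_eq_sum c (P + Q) ((P + Q).vars ∪ (P.vars ∪ Q.vars)) Finset.subset_union_left,
    diffOp_eq_sum c P ((P + Q).vars ∪ (P.vars ∪ Q.vars))
      (Finset.subset_union_left.trans Finset.subset_union_right),
    diffOp_eq_sum c Q ((P + Q).vars ∪ (P.vars ∪ Q.vars))
      (Finset.subset_union_right.trans Finset.subset_union_right),
    ← Finset.sum_add_distrib]
  exact Finset.sum_congr rfl fun x _ => by rw [map_add, mul_add]

lemma diffOp_mul (c : Raiz n → Pol n) (P Q : Pol n) :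
    diffOp c (P * Q) = diffOp c P * Q + P * diffOp c Q := by
  classical
  rw [diffOp_eq_sum c (P * Q) ((P * Q).vars ∪ (P.vars ∪ Q.vars)) Finset.subset_union_left,
    diffOp_eq_sum c P ((P * Q).vars ∪ (P.vars ∪ Q.vars))
      (Finset.subset_union_left.trans Finset.subset_union_right),
    diffOp_eq_sum c Q ((P * Q).vars ∪ (P.vars ∪ Q.vars))
      (Finset.subset_union_right.trans Finset.subset_union_right),
    Finset.sum_mul, Finset.mul_sum, ← Finset.sum_add_distrib]
  exact Finset.sum_congr rfl fun x _ => by rw [pderiv_mul]; ring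

lemma diffOp_C (c : Raiz n → Pol n) (r : ℚ) : diffOp c (C r) = 0 := by
  rw [diffOp, vars_C, Finset.sum_empty]

lemma diffOp_zero (c : Raiz n → Pol n) : diffOp c 0 = 0 := by
  rw [diffOp, vars_0, Finset.sum_empty]

lemma diffOp_one (c : Raiz n → Pol n) : diffOp c 1 = 0 := by
  rw [← C_1, diffOp_C]

lemma diffOp_X (c : Raiz n → Pol n) (η : Raiz n) : diffOp c (X η) = c η := by
  rw [diffOp, vars_X, Finset.sum_singleton, pderiv_X_self, mul_one]

lemma diffOp_C_mul (c : Raiz n → Pol n) (r : ℚ) (P : Pol n) :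
    diffOp c (C r * P) = C r * diffOp c P := by
  rw [diffOp_mul, diffOp_C, zero_mul, zero_add]

lemma diffOp_smul (c : Raiz n → Pol n) (r : ℚ) (P : Pol n) :
    diffOp c (r • P) = r • diffOp c P := by
  rw [smul_eq_C_mul, diffOp_C_mul, smul_eq_C_mul]

lemma diffOp_neg (c : Raiz n → Pol n) (P : Pol n) : diffOp c (-P) = -diffOp c P := by
  have := diffOp_smul c (-1) P
  simpa using this

lemma diffOp_sub (c : Raiz n → Pol n) (P Q : Pol n) :
    diffOp c (P - Q) = diffOp c P - diffOp c Q := by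
  rw [sub_eq_add_neg, diffOp_add, diffOp_neg, sub_eq_add_neg]

lemma diffOp_coeff_sub (c c' : Raiz n → Pol n) (P : Pol n) :
    diffOp (fun η => c η - c' η) P = diffOp c P - diffOp c' P := by
  unfold diffOp
  rw [← Finset.sum_sub_distrib]
  exact Finset.sum_congr rfl fun x _ => by ring

lemma diffOp_coeff_add (c c' : Raiz n → Pol n) (P : Pol n) :
    diffOp (fun η => c η + c' η) P = diffOp c P + diffOp c' P := by
  unfold diffOp
  rw [← Finset.sum_add_distrib]
  exact Finset.sum_congr rfl fun x _ => by ring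

/-! ### Derivations -/

/-- Derivation property for an operator on `N`. -/
def IsDer (F : Op n) : Prop :=
  (∀ P Q, F (P + Q) = F P + F Q) ∧ (∀ (r : ℚ) (P : Pol n), F (C r * P) = C r * F P) ∧
    (∀ P Q, F (P * Q) = F P * Q + P * F Q)

lemma isDer_diffOp (c : Raiz n → Pol n) : IsDer (diffOp c) :=
  ⟨diffOp_add c, diffOp_C_mul c, diffOp_mul c⟩

lemma IsDer.map_one {F : Op n} (h : IsDer F) : F 1 = 0 := by
  have := h.2.2 1 1
  simp only [mul_one, one_mul] at this
  exact left_eq_add.mp this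

lemma IsDer.map_C {F : Op n} (h : IsDer F) (r : ℚ) : F (C r) = 0 := by
  have := h.2.1 r 1
  rw [mul_one] at this
  rw [this, h.map_one, mul_zero]

lemma IsDer.ext {F G : Op n} (hF : IsDer F) (hG : IsDer G)
    (h : ∀ ρ : Raiz n, F (X ρ) = G (X ρ)) : F = G := by
  funext P
  induction P using MvPolynomial.induction_on with
  | C r => rw [hF.map_C, hG.map_C]
  | add p q hp hq => rw [hF.1, hG.1, hp, hq]
  | mul_X p η hp => rw [hF.2.2, hG.2.2, hp, h]

lemma IsDer.add {F G : Op n} (hF : IsDer F) (hG : IsDer G) :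
    IsDer (fun P => F P + G P) := by
  refine ⟨fun P Q => ?_, fun r P => ?_, fun P Q => ?_⟩ <;> dsimp only
  · rw [hF.1, hG.1]; ring
  · rw [hF.2.1, hG.2.1]; ring
  · rw [hF.2.2, hG.2.2]; ring

lemma IsDer.mulLeft {F : Op n} (hF : IsDer F) (g : Pol n) :
    IsDer (fun P => g * F P) := by
  refine ⟨fun P Q => ?_, fun r P => ?_, fun P Q => ?_⟩ <;> dsimp only
  · rw [hF.1]; ring
  · rw [hF.2.1]; ring
  · rw [hF.2.2]; ring

lemma IsDer.brak {F G : Op n} (hF : IsDer F) (hG : IsDer G) : IsDer (_root_.brak F G) := by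
  refine ⟨fun P Q => ?_, fun r P => ?_, fun P Q => ?_⟩ <;> unfold _root_.brak
  · rw [hF.1, hG.1, hF.1, hG.1]; ring
  · rw [hF.2.1, hG.2.1, hG.2.1, hF.2.1]; ring
  · rw [hG.2.2, hF.1, hF.2.2, hF.2.2, hF.2.2, hG.1, hG.2.2, hG.2.2]; ring

lemma isDer_zero : IsDer (fun _ => (0 : Pol n)) :=
  ⟨fun P Q => by simp, fun r P => by simp, fun P Q => by simp⟩

end CommEF
namespace CommEF
open MvPolynomial

variable {n : ℕ}

/-! ### Coefficient functions of the Chevalley operators -/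

/-- Coefficient function of `e_i^T = Ẽ(i)`. -/
noncomputable def aC (i : ZMod n) : Raiz n → Pol n := fun η =>
  if η = Raiz.simple i then 1
  else if η.1 = i ∧ 1 < η.2 then X ((i - 1, η.2 - 1) : Raiz n) else 0

/-- Coefficient function of `B(j) - E(j)`. -/
noncomputable def bC (j : ZMod n) : Raiz n → Pol n := fun ϑ =>
  (if Raiz.beg ϑ = j + 1 then X ((ϑ.1, 1 + ϑ.2) : Raiz n) else 0)
    - (if ϑ.1 = j - 1 then X ((j, ϑ.2 + 1) : Raiz n) else 0)

/-- Coefficient function of `𝔅_{j-1} - 𝔅_j`. -/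
noncomputable def dC (j : ZMod n) : Raiz n → Pol n := fun ϑ =>
  (if Raiz.beg ϑ = j then X ϑ else 0) - (if Raiz.beg ϑ = j + 1 then X ϑ else 0)

/-- Coefficient function of the derivation part of `h_i^T`. -/
noncomputable def hC (i : ZMod n) : Raiz n → Pol n := fun ρ =>
  ((if ρ.1 = i then X ρ else 0) - (if ρ.1 = i - 1 then X ρ else 0)) + dC i ρ

lemma beg_simple (i : ZMod n) : Raiz.beg (Raiz.simple i) = i := by
  simp [Raiz.beg, Raiz.simple, sub_add_cancel]

lemma eT_eq (i : ZMod n) : (eT i : Op n) = diffOp (aC i) := by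
  unfold eT Etil aC
  funext η
  rw [beg_simple]
  rfl

lemma BE_eq (j : ZMod n) :
    (fun P => Bop (Raiz.simple j) P - Eop (Raiz.simple j) P : Op n) = diffOp (bC j) := by
  funext P
  rw [show diffOp (bC j) P
      = diffOp (fun ϑ : Raiz n => if Raiz.beg ϑ = j + 1 then X ((ϑ.1, 1 + ϑ.2) : Raiz n) else 0) P
        - diffOp (fun ϑ : Raiz n => if ϑ.1 = j - 1 then X ((j, ϑ.2 + 1) : Raiz n) else 0) P
    from diffOp_coeff_sub _ _ P]
  unfold Bop Eop
  congr 2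
  funext ϑ
  rw [beg_simple]
  rfl

lemma Delta0_eq (j : ZMod n) :
    (fun P => Bfrak (j - 1) P - Bfrak j P : Op n) = diffOp (dC j) := by
  funext P
  rw [show diffOp (dC j) P
      = diffOp (fun ϑ : Raiz n => if Raiz.beg ϑ = j then X ϑ else 0) P
        - diffOp (fun ϑ : Raiz n => if Raiz.beg ϑ = j + 1 then X ϑ else 0) P
    from diffOp_coeff_sub _ _ P]
  unfold Bfrak
  congr 2
  funext ϑ
  rw [sub_add_cancel]

lemma hT0_eq (i : ZMod n) :
    (fun P => Efrak (i + 1) P - Efrak i P + (Bfrak (i - 1) P - Bfrak i P) : Op n)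
      = diffOp (hC i) := by
  funext P
  rw [show diffOp (hC i) P
      = diffOp (fun ρ : Raiz n =>
          (if ρ.1 = i then X ρ else 0) - (if ρ.1 = i - 1 then X ρ else 0)) P
        + diffOp (dC i) P
    from diffOp_coeff_add _ _ P]
  rw [show diffOp (fun ρ : Raiz n =>
          (if ρ.1 = i then X ρ else 0) - (if ρ.1 = i - 1 then X ρ else 0)) P
      = diffOp (fun ρ : Raiz n => if ρ.1 = i then X ρ else 0) P
        - diffOp (fun ρ : Raiz n => if ρ.1 = i - 1 then X ρ else 0) P
    from diffOp_coeff_sub _ _ P]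
  rw [← Delta0_eq]
  unfold Efrak
  congr 3
  funext ρ
  rw [add_sub_cancel_right]

lemma aC_simple (i j : ZMod n) :
    aC i (Raiz.simple j) = if i = j then 1 else 0 := by
  unfold aC
  simp only [Raiz.simple, Prod.mk.injEq, and_true, lt_self_iff_false, and_false, if_false]
  by_cases h : i = j
  · subst h; simp
  · rw [if_neg (fun hh : j = i => h hh.symm), if_neg h]

lemma fT_decomp (c : ZMod n → ℚ) (j : ZMod n) (P : Pol n) :
    fT c j P = diffOp (bC j) P + X (Raiz.simple j) * diffOp (dC j) P
      + c j • (X (Raiz.simple j) * P) := by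
  unfold fT Delta
  rw [show Bop (Raiz.simple j) P - Eop (Raiz.simple j) P = diffOp (bC j) P
      from congrFun (BE_eq j) P]
  rw [show Bfrak (j - 1) P - Bfrak j P + c j • P = diffOp (dC j) P + c j • P by
      rw [congrFun (Delta0_eq j) P]]
  rw [mul_add, mul_smul_comm]
  ring

lemma brak_eT_G0 (i j : ZMod n) :
    brak (eT i) (fun P => diffOp (bC j) P + X (Raiz.simple j) * diffOp (dC j) P)
      = fun P => brak (diffOp (aC i)) (diffOp (bC j)) P
          + (if i = j then (1 : Pol n) else 0) * diffOp (dC j) P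
          + X (Raiz.simple j) * brak (diffOp (aC i)) (diffOp (dC j)) P := by
  funext P
  rw [eT_eq]
  unfold brak
  rw [diffOp_add, diffOp_mul, diffOp_X, aC_simple]
  ring


end CommEF
namespace CommEF
open MvPolynomial

variable {n : ℕ}

/-! ### Helper lemmas for the generator identity -/

lemma diffOp_ite (c : Raiz n → Pol n) (p : Prop) [Decidable p] (η : Raiz n) :
    diffOp c (if p then X η else 0) = if p then c η else 0 := by
  split_ifs with h
  exacts [diffOp_X c η, diffOp_zero c]

lemma diffOp_bC (c : Raiz n → Pol n) (j : ZMod n) (ρ : Raiz n) :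
    diffOp c (bC j ρ)
      = (if Raiz.beg ρ = j + 1 then c ((ρ.1, 1 + ρ.2) : Raiz n) else 0)
        - (if ρ.1 = j - 1 then c ((j, ρ.2 + 1) : Raiz n) else 0) := by
  unfold bC
  rw [diffOp_sub, diffOp_ite, diffOp_ite]

lemma diffOp_dC (c : Raiz n → Pol n) (j : ZMod n) (ρ : Raiz n) :
    diffOp c (dC j ρ)
      = (if Raiz.beg ρ = j then c ρ else 0) - (if Raiz.beg ρ = j + 1 then c ρ else 0) := by
  unfold dC
  rw [diffOp_sub, diffOp_ite, diffOp_ite]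

lemma diffOp_aC (c : Raiz n → Pol n) (i : ZMod n) (ρ : Raiz n) :
    diffOp c (aC i ρ)
      = if ρ = Raiz.simple i then 0
        else if ρ.1 = i ∧ 1 < ρ.2 then c ((i - 1, ρ.2 - 1) : Raiz n) else 0 := by
  unfold aC
  rw [apply_ite (diffOp c), diffOp_one, diffOp_ite]

lemma pnat_one_lt_one_add (ℓ : ℕ+) : (1 : ℕ+) < 1 + ℓ := by
  rw [← PNat.coe_lt_coe, PNat.add_coe, PNat.one_coe]
  have := ℓ.pos
  omega

lemma pnat_one_lt_add_one (ℓ : ℕ+) : (1 : ℕ+) < ℓ + 1 := by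
  rw [← PNat.coe_lt_coe, PNat.add_coe, PNat.one_coe]
  have := ℓ.pos
  omega

lemma pnat_one_add_sub (ℓ : ℕ+) : 1 + ℓ - 1 = ℓ := by
  apply PNat.coe_injective
  rw [PNat.sub_coe, if_pos (pnat_one_lt_one_add ℓ), PNat.add_coe, PNat.one_coe]
  omega

lemma pnat_add_one_sub (ℓ : ℕ+) : ℓ + 1 - 1 = ℓ := by
  apply PNat.coe_injective
  rw [PNat.sub_coe, if_pos (pnat_one_lt_add_one ℓ), PNat.add_coe, PNat.one_coe]
  omega

lemma pnat_sub_add {ℓ : ℕ+} (h : 1 < ℓ) : ℓ - 1 + 1 = ℓ := by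
  apply PNat.coe_injective
  rw [PNat.add_coe, PNat.sub_coe, if_pos h, PNat.one_coe]
  have : 1 < (ℓ : ℕ) := h
  omega

lemma pnat_add_sub' {ℓ : ℕ+} (h : 1 < ℓ) : 1 + (ℓ - 1) = ℓ := by
  rw [add_comm, pnat_sub_add h]

lemma pnat_cast_sub {ℓ : ℕ+} (h : 1 < ℓ) :
    (((ℓ - 1 : ℕ+) : ℕ) : ZMod n) = ((ℓ : ℕ) : ZMod n) - 1 := by
  rw [PNat.sub_coe, if_pos h, PNat.one_coe]
  have h1 : 1 ≤ (ℓ : ℕ) := ℓ.one_le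
  push_cast [Nat.cast_sub h1]
  ring

lemma one_ne_zero' (hn : 2 ≤ n) : (1 : ZMod n) ≠ 0 := by
  haveI : NeZero n := ⟨by omega⟩
  intro h
  rw [← Nat.cast_one, ZMod.natCast_eq_zero_iff] at h
  have := Nat.le_of_dvd one_pos h
  omega

lemma aC_eval (i : ZMod n) (η : Raiz n) (h2 : 1 < η.2) :
    aC i η = if η.1 = i then X ((i - 1, η.2 - 1) : Raiz n) else 0 := by
  unfold aC
  rw [if_neg, if_congr (Iff.intro (fun h => h.1) (fun h => ⟨h, h2⟩)) rfl rfl]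
  intro h
  rw [h] at h2
  exact absurd h2 (lt_irrefl _)

lemma beg_pair (r : ZMod n) (ℓ : ℕ+) :
    Raiz.beg ((r, ℓ) : Raiz n) = r - ((ℓ : ℕ) : ZMod n) + 1 := rfl

end CommEF
namespace CommEF
open MvPolynomial

variable {n : ℕ}

lemma zmod_ne_sub_one (hn : 2 ≤ n) (x : ZMod n) : x ≠ x - 1 :=
  fun h => one_ne_zero' hn (by linear_combination h)

lemma zmod_ne_add_one (hn : 2 ≤ n) (x : ZMod n) : x ≠ x + 1 :=
  fun h => one_ne_zero' hn (by linear_combination -h)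

/-- The core generator identity. -/
lemma key (hn : 2 ≤ n) (i j : ZMod n) (ρ : Raiz n) :
    diffOp (aC i) (bC j ρ) - diffOp (bC j) (aC i ρ)
      + (if i = j then (1 : Pol n) else 0) * dC j ρ
      + X (Raiz.simple j) * (diffOp (aC i) (dC j ρ) - diffOp (dC j) (aC i ρ))
    = if i = j then hC i ρ else 0 := by
  obtain ⟨r, ℓ⟩ := ρ
  have h10 := one_ne_zero' (n := n) hn
  rw [diffOp_bC, diffOp_dC, diffOp_aC, diffOp_aC]
  dsimp only
  have ha1 : aC i ((r, 1 + ℓ) : Raiz n) = if r = i then X ((i - 1, ℓ) : Raiz n) else 0 := by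
    rw [aC_eval i _ (pnat_one_lt_one_add ℓ)]
    dsimp only
    rw [pnat_one_add_sub]
  have ha2 : aC i ((j, ℓ + 1) : Raiz n) = if j = i then X ((i - 1, ℓ) : Raiz n) else 0 := by
    rw [aC_eval i _ (pnat_one_lt_add_one ℓ)]
    dsimp only
    rw [pnat_add_one_sub]
  rw [ha1, ha2]
  rcases eq_or_ne r i with hri | hri
  · subst hri
    -- now `i` has been replaced by `r` everywhere
    rcases eq_or_ne ℓ 1 with hl1 | hl1
    · subst hl1
      -- Case B : ρ = (r,1) = simple r
      have ha0 : aC r (((r : ZMod n), (1 : ℕ+)) : Raiz n) = 1 := by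
        unfold aC
        rw [if_pos (show (((r : ZMod n), (1 : ℕ+)) : Raiz n) = Raiz.simple r from rfl)]
      have hb : Raiz.beg (((r : ZMod n), (1 : ℕ+)) : Raiz n) = r := beg_simple r
      rw [ha0, hb]
      simp only [if_pos (show (((r : ZMod n), (1 : ℕ+)) : Raiz n) = Raiz.simple r from rfl)]
      unfold hC dC
      rw [hb]
      dsimp only
      simp only [Raiz.simple, if_pos (rfl : (r : ZMod n) = r), sub_zero]
      by_cases hrj : r = j
      · subst hrj
        simp only [if_pos (rfl : (r : ZMod n) = r), if_neg (zmod_ne_add_one hn r),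
          if_neg (zmod_ne_sub_one hn r)]
        split_ifs <;> first | ring | simp_all
      · have hjr : ¬j = r := fun h => hrj h.symm
        by_cases hrj1 : r = j + 1
        · have hd : r - 1 = j := by linear_combination hrj1
          simp only [if_pos hrj1, if_neg hrj, if_neg hjr, ite_self, hd]
          split_ifs <;> first | ring | simp_all
        · simp only [if_neg hrj, if_neg hrj1, if_neg hjr, ite_self]
          ring
    · have hl : 1 < ℓ := lt_of_le_of_ne ℓ.one_le (Ne.symm hl1)
      -- Case C : 1 < ℓ
      have hs : (((r : ZMod n), ℓ) : Raiz n) ≠ Raiz.simple r := fun h =>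
        hl1 (congrArg Prod.snd h)
      have ha : aC r (((r : ZMod n), ℓ) : Raiz n) = X ((r - 1, ℓ - 1) : Raiz n) := by
        rw [aC_eval r _ hl]
        dsimp only
        rw [if_pos rfl]
      have hbeg : Raiz.beg ((r - 1, ℓ - 1) : Raiz n) = Raiz.beg (((r : ZMod n), ℓ) : Raiz n) := by
        rw [beg_pair, beg_pair, pnat_cast_sub hl]
        ring
      have hbc : bC j ((r - 1, ℓ - 1) : Raiz n)
          = (if Raiz.beg (((r : ZMod n), ℓ) : Raiz n) = j + 1 then X ((r - 1, ℓ) : Raiz n) else 0)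
            - (if r = j then X ((j, ℓ) : Raiz n) else 0) := by
        unfold bC
        dsimp only
        rw [hbeg, pnat_add_sub' hl, pnat_sub_add hl, if_congr sub_left_inj rfl rfl]
      have hdc : dC j ((r - 1, ℓ - 1) : Raiz n)
          = (if Raiz.beg (((r : ZMod n), ℓ) : Raiz n) = j then X ((r - 1, ℓ - 1) : Raiz n) else 0)
            - (if Raiz.beg (((r : ZMod n), ℓ) : Raiz n) = j + 1
                then X ((r - 1, ℓ - 1) : Raiz n) else 0) := by
        unfold dC
        rw [hbeg]
      rw [if_neg hs, if_neg hs, ha]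
      rw [if_pos (show ((((r : ZMod n), ℓ) : Raiz n).1 = r ∧ 1 < (((r : ZMod n), ℓ) : Raiz n).2)
        from ⟨rfl, hl⟩), if_pos (show ((((r : ZMod n), ℓ) : Raiz n).1 = r ∧ 1 < (((r : ZMod n), ℓ) : Raiz n).2)
        from ⟨rfl, hl⟩)]
      try dsimp only
      rw [hbc, hdc]
      unfold hC dC
      try dsimp only
      by_cases hrj : r = j
      · subst hrj
        simp only [if_pos (rfl : (r : ZMod n) = r), if_neg (zmod_ne_sub_one hn r)]
        split_ifs <;> first | ring | simp_all
      · have hjr : ¬j = r := fun h => hrj h.symm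
        simp only [if_neg hrj, if_neg hjr, ite_self]
        split_ifs <;> first | ring | simp_all
  · -- Case A : r ≠ i
    have hs : ((r, ℓ) : Raiz n) ≠ Raiz.simple i := fun h => hri (congrArg Prod.fst h)
    have hc : ¬(r = i ∧ 1 < ℓ) := fun h => hri h.1
    have ha0 : aC i ((r, ℓ) : Raiz n) = 0 := by
      unfold aC
      rw [if_neg hs, if_neg hc]
    simp only [ha0, if_neg hs, if_neg hc, if_neg hri, ite_self, mul_zero, sub_zero,
      zero_sub, sub_self, zero_add, add_zero]
    unfold hC dC
    dsimp only
    by_cases hij : i = j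
    · subst hij
      simp only [if_pos (rfl : (i : ZMod n) = i)]
      rw [if_neg hri]
      by_cases hr1 : r = i - 1
      · rw [hr1]
        split_ifs <;> first | ring | simp_all
      · split_ifs <;> first | ring | simp_all
    · have hji : ¬j = i := fun h => hij h.symm
      rw [if_neg hij, if_neg hij, if_neg hji, ite_self, zero_mul, neg_zero, zero_add]

end CommEF
namespace CommEF
open MvPolynomial

variable {n : ℕ}

theorem main (hn : 2 ≤ n) (c : ZMod n → ℚ) (i j : ZMod n) :
    brak (eT i) (fT c j) = if i = j then hT c i else 0 := by
  have hG0 : brak (eT i) (fun P => diffOp (bC j) P + X (Raiz.simple j) * diffOp (dC j) P)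
      = if i = j then diffOp (hC i) else fun _ => (0 : Pol n) := by
    rw [brak_eT_G0]
    refine IsDer.ext ?_ ?_ ?_
    · exact (((isDer_diffOp _).brak (isDer_diffOp _)).add
        ((isDer_diffOp _).mulLeft _)).add (((isDer_diffOp _).brak (isDer_diffOp _)).mulLeft _)
    · by_cases h : i = j <;> simp only [h, if_true, if_false]
      · exact isDer_diffOp _
      · exact isDer_zero
    · intro ρ
      have hk := key hn i j ρ
      unfold brak
      by_cases h : i = j
      · simp only [h, eq_self_iff_true, if_true, diffOp_X] at hk ⊢
        exact hk
      · simp only [h, if_false, diffOp_X] at hk ⊢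
        exact hk
  funext P
  have hG0P := congrFun hG0 P
  unfold brak at hG0P
  dsimp only at hG0P
  have hID : eT i (X (Raiz.simple j) * P) = (if i = j then (1 : Pol n) else 0) * P
      + X (Raiz.simple j) * eT i P := by
    rw [eT_eq, diffOp_mul, diffOp_X, aC_simple]
  have hadd : eT i (diffOp (bC j) P + X (Raiz.simple j) * diffOp (dC j) P
        + c j • (X (Raiz.simple j) * P))
      = eT i (diffOp (bC j) P + X (Raiz.simple j) * diffOp (dC j) P)
        + c j • eT i (X (Raiz.simple j) * P) := by
    rw [eT_eq, diffOp_add, diffOp_smul]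
  unfold brak
  rw [fT_decomp, fT_decomp, hadd, hID]
  by_cases h : i = j
  · subst h
    simp only [eq_self_iff_true, if_true] at hG0P ⊢
    rw [show hT c i P = diffOp (hC i) P + c i • P by
      unfold hT Delta
      rw [show Efrak (i+1) P - Efrak i P + (Bfrak (i-1) P - Bfrak i P + c i • P)
          = Efrak (i+1) P - Efrak i P + (Bfrak (i-1) P - Bfrak i P) + c i • P by ring]
      rw [congrFun (hT0_eq i) P]]
    simp only [smul_eq_C_mul] at hG0P ⊢
    linear_combination hG0P
  · simp only [if_neg h, Pi.zero_apply] at hG0P ⊢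
    simp only [smul_eq_C_mul]
    linear_combination hG0P

end CommEF

/-- For all `i, j ∈ ℤ/nℤ`, `[e_i^T, f_j^T] = δ_{ij}·h_i^T`. -/
theorem commutator_eT_fT {n : ℕ} (hn : 2 ≤ n) (c : ZMod n → ℚ) (i j : ZMod n) :
    brak (eT i) (fT c j) = if i = j then hT c i else 0 :=
  CommEF.main hn c i j
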